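/- Let P ≪ Q be probability measures and (G_n) an increasing sequence of sub-σ-fields generating G_∞. Then D(P|_{G_n}‖Q|_{G_n}) increases to D(P|_{G_∞}‖Q|_{G_∞}) as n → ∞. -/

import Mathlib

open MeasureTheory Filter Topology
open scoped ENNReal
open scoped NNReal

/-- Kullback–Leibler divergence `D(P‖Q) = ∫ log (dP/dQ) dP`, with value `∞` when `P` is not
absolutely continuous w.r.t. `Q` or the integral does not exist. -/
noncomputable def klDiv {α : Type*} [MeasurableSpace α] (P Q : Measure α) : ℝ≥0∞ :=
  open scoped Classical in
  if P ≪ Q ∧ Integrable (fun x => Real.log (P.rnDeriv Q x).toReal) P then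
    ENNReal.ofReal (∫ x, Real.log (P.rnDeriv Q x).toReal ∂P)
  else ⊤

namespace KLAux

lemma tangent_le {x t : ℝ} (hx : 0 ≤ x) (ht : 0 < t) :
    (Real.log t + 1) * x - t ≤ x * Real.log x := by
  rcases eq_or_lt_of_le hx with h0 | hx0
  · simp only [← h0, mul_zero, zero_sub, zero_mul]
    linarith
  · have h1 : Real.log t - Real.log x ≤ t / x - 1 := by
      have := Real.log_le_sub_one_of_pos (div_pos ht hx0)
      rwa [Real.log_div (ne_of_gt ht) (ne_of_gt hx0)] at this
    have h2 := mul_le_mul_of_nonneg_left h1 hx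
    have h3 : x * (t / x - 1) = t - x := by field_simp
    rw [h3] at h2
    nlinarith

lemma neg_exp_le_mul_log {x : ℝ} (hx : 0 ≤ x) : -Real.exp (-1) ≤ x * Real.log x := by
  have := tangent_le hx (Real.exp_pos (-1))
  rw [Real.log_exp] at this
  linarith

lemma mul_log_le_of_forall_rat {x y : ℝ} (hx : 0 ≤ x)
    (h : ∀ q : ℚ, 0 < (q : ℝ) → (Real.log q + 1) * x - q ≤ y) : x * Real.log x ≤ y := by
  by_contra hlt
  push_neg at hlt
  rcases eq_or_lt_of_le hx with h0 | hx0
  · have hy : y < 0 := by simpa [← h0] using hlt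
    obtain ⟨q, hq0, hqy⟩ := exists_rat_btwn (show (0:ℝ) < -y by linarith)
    have := h q hq0
    rw [← h0] at this
    simp only [mul_zero, zero_sub] at this
    linarith
  · have hc : ContinuousAt (fun t : ℝ => (Real.log t + 1) * x - t) x :=
      ((((Real.continuousAt_log hx0.ne').add continuousAt_const).mul continuousAt_const).sub
        continuousAt_id)
    have hfx : y < (Real.log x + 1) * x - x := by nlinarith
    have hev : ∀ᶠ t in 𝓝 x, 0 < t ∧ y < (Real.log t + 1) * x - t :=
      (eventually_gt_nhds hx0).and (hc.eventually_const_lt hfx)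
    obtain ⟨z, hz, q, rfl⟩ := mem_closure_iff_nhds.mp (Rat.denseRange_cast x) _ hev
    exact absurd (h q hz.1) (not_le.mpr hz.2)


variable {Ω : Type*} {m m0 : MeasurableSpace Ω}

lemma isProbabilityMeasure_trim (Q : Measure Ω) [IsProbabilityMeasure Q] (hm : m ≤ m0) :
    IsProbabilityMeasure (Q.trim hm) :=
  ⟨by rw [trim_measurableSet_eq hm (@MeasurableSet.univ Ω m)]; exact measure_univ⟩

lemma sigmaFinite_trim (Q : Measure Ω) [IsProbabilityMeasure Q] (hm : m ≤ m0) :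
    SigmaFinite (Q.trim hm) := by
  haveI := isProbabilityMeasure_trim Q hm
  infer_instance

lemma jensen_condexp (Q : Measure Ω) [IsProbabilityMeasure Q] (hm : m ≤ m0)
    {h : Ω → ℝ} (hint : Integrable h Q) (hpos : 0 ≤ᵐ[Q] h)
    (hφ : Integrable (fun ω => h ω * Real.log (h ω)) Q) :
    Integrable (fun ω => (Q[h|m]) ω * Real.log ((Q[h|m]) ω)) Q ∧
      ∫ ω, (Q[h|m]) ω * Real.log ((Q[h|m]) ω) ∂Q ≤ ∫ ω, h ω * Real.log (h ω) ∂Q := by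
  haveI := sigmaFinite_trim Q hm
  set g := Q[h|m] with hgdef
  set c := Q[fun ω => h ω * Real.log (h ω)|m] with hcdef
  have hgpos : 0 ≤ᵐ[Q] g := condExp_nonneg hpos
  have h1 : ∀ q : ℚ, 0 < (q : ℝ) →
      (fun ω => (Real.log q + 1) * g ω - q) ≤ᵐ[Q] c := by
    intro q hq
    have hle : (fun ω => (Real.log q + 1) * h ω - (q : ℝ)) ≤ᵐ[Q]
        fun ω => h ω * Real.log (h ω) := by
      filter_upwards [hpos] with ω hω using tangent_le hω hq
    have hintq : Integrable (fun ω => (Real.log q + 1) * h ω - (q : ℝ)) Q :=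
      (hint.const_mul _).sub (integrable_const _)
    have hmono := condExp_mono (m := m) hintq hφ hle
    have heq : Q[fun ω => (Real.log q + 1) * h ω - (q : ℝ)|m] =ᵐ[Q]
        fun ω => (Real.log q + 1) * g ω - q := by
      have e1 := condExp_sub (μ := Q) (m := m) (hint.const_mul (Real.log q + 1))
        (integrable_const (q : ℝ))
      have e2 : Q[fun ω => (Real.log q + 1) * h ω|m] =ᵐ[Q] fun ω => (Real.log q + 1) * g ω := by
        have := condExp_smul (μ := Q) (m := m) (Real.log q + 1) h
        exact this
      have e3 : Q[fun _ : Ω => (q : ℝ)|m] = fun _ => (q : ℝ) := condExp_const hm _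
      filter_upwards [e1, e2] with ω hω1 hω2
      simp only [Pi.sub_apply] at hω1
      calc (Q[fun ω => (Real.log ↑q + 1) * h ω - (q : ℝ)|m]) ω
          = (Q[fun ω => (Real.log ↑q + 1) * h ω|m]) ω - (Q[fun _ : Ω => (q : ℝ)|m]) ω := hω1
        _ = (Real.log ↑q + 1) * g ω - ↑q := by rw [hω2, e3]
    filter_upwards [hmono, heq] with ω hω1 hω2
    rw [← hω2]
    exact hω1
  have h2 : ∀ᵐ ω ∂Q, ∀ q : ℚ, 0 < (q : ℝ) → (Real.log q + 1) * g ω - q ≤ c ω := by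
    rw [ae_all_iff]
    intro q
    by_cases hq : 0 < (q : ℝ)
    · filter_upwards [h1 q hq] with ω hω _ using hω
    · filter_upwards with ω hq' using absurd hq' hq
  have key : ∀ᵐ ω ∂Q, g ω * Real.log (g ω) ≤ c ω := by
    filter_upwards [h2, hgpos] with ω hω hgω
    exact mul_log_le_of_forall_rat hgω fun q hq => hω q hq
  have hmeas : AEStronglyMeasurable (fun ω => g ω * Real.log (g ω)) Q :=
    (Real.continuous_mul_log.comp_stronglyMeasurable
      (stronglyMeasurable_condExp.mono hm)).aestronglyMeasurable
  have hintg : Integrable (fun ω => g ω * Real.log (g ω)) Q := by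
    refine Integrable.mono' (g := fun ω => |c ω| + Real.exp (-1))
      (integrable_condExp.abs.add (integrable_const (Real.exp (-1)))) hmeas ?_
    filter_upwards [key, hgpos] with ω h1' h2'
    have hlb := neg_exp_le_mul_log h2'
    rw [Real.norm_eq_abs, abs_le]
    have ha := abs_nonneg (c ω)
    have hb := le_abs_self (c ω)
    have he := (Real.exp_pos (-1)).le
    constructor
    · linarith
    · linarith
  refine ⟨hintg, ?_⟩
  calc ∫ ω, g ω * Real.log (g ω) ∂Q ≤ ∫ ω, c ω ∂Q :=
        integral_mono_ae hintg integrable_condExp key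
    _ = ∫ ω, h ω * Real.log (h ω) ∂Q := integral_condExp hm


end KLAux

open scoped Classical in
/-- The `φ(x) = x log x` entropy functional, as `ℝ≥0∞`. -/
noncomputable def KLAux.D {Ω : Type*} [MeasurableSpace Ω] (Q : Measure Ω) (g : Ω → ℝ) : ℝ≥0∞ :=
  if Integrable (fun ω => g ω * Real.log (g ω)) Q
  then ENNReal.ofReal (∫ ω, g ω * Real.log (g ω) ∂Q)
  else ⊤

namespace KLAux

variable {Ω : Type*} {m m0 : MeasurableSpace Ω}

lemma klDiv_trim_eq (P Q : Measure Ω) [IsProbabilityMeasure P] [IsProbabilityMeasure Q]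
    (hPQ : P ≪ Q) (hm : m ≤ m0) :
    @klDiv Ω m (P.trim hm) (Q.trim hm) = D Q (Q[fun a => (P.rnDeriv Q a).toReal|m]) := by
  haveI := isProbabilityMeasure_trim P hm
  haveI := isProbabilityMeasure_trim Q hm
  set F := fun a => (P.rnDeriv Q a).toReal with hFdef
  set g := Q[F|m] with hgdef
  have hF_int : Integrable F Q := Measure.integrable_toReal_rnDeriv
  have hgm : StronglyMeasurable[m] g := stronglyMeasurable_condExp
  have hmg : Measurable[m] fun ω => ENNReal.ofReal (g ω) :=
    ENNReal.measurable_ofReal.comp hgm.measurable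
  have hg_int : Integrable g Q := integrable_condExp
  have hgpos : 0 ≤ᵐ[Q] g :=
    condExp_nonneg (Eventually.of_forall fun a => ENNReal.toReal_nonneg)
  -- nonnegativity also holds a.e. w.r.t. the trimmed measure
  have hgpos' : 0 ≤ᵐ[Q.trim hm] g := by
    have hs : MeasurableSet[m] {ω | g ω < 0} :=
      measurableSet_lt hgm.measurable measurable_const
    have h0 : Q {ω | g ω < 0} = 0 := by
      have := hgpos
      rw [EventuallyLE, ae_iff] at this
      simpa only [Pi.zero_apply, not_le] using this
    rw [EventuallyLE, ae_iff]
    simp only [Pi.zero_apply, not_le]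
    rw [trim_measurableSet_eq hm hs]
    exact h0
  -- Step 1: the trimmed `P` has density `g` w.r.t. the trimmed `Q`
  have hPtrim : P.trim hm = (Q.trim hm).withDensity (fun ω => ENNReal.ofReal (g ω)) := by
    refine @Measure.ext Ω m _ _ fun s hs => ?_
    rw [trim_measurableSet_eq hm hs, withDensity_apply _ hs, restrict_trim hm _ hs,
      lintegral_trim hm hmg,
      ← ofReal_integral_eq_lintegral_ofReal hg_int.integrableOn (ae_restrict_of_ae hgpos),
      setIntegral_condExp hm hF_int hs, Measure.setIntegral_toReal_rnDeriv hPQ s,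
      measureReal_def, ENNReal.ofReal_toReal (measure_ne_top P s)]
  -- Step 2: Radon–Nikodym derivative of the trimmed measures
  have hrn : (P.trim hm).rnDeriv (Q.trim hm) =ᵐ[Q.trim hm] fun ω => ENNReal.ofReal (g ω) := by
    rw [hPtrim]
    exact Measure.rnDeriv_withDensity (Q.trim hm) hmg
  have hac : P.trim hm ≪ Q.trim hm := by
    rw [hPtrim]; exact withDensity_absolutelyContinuous _ _
  have htr : (fun ω => ((P.trim hm).rnDeriv (Q.trim hm) ω).toReal) =ᵐ[P.trim hm] g := by
    filter_upwards [hac.ae_le hrn, hac.ae_le hgpos'] with ω h1 h2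
    rw [h1, ENNReal.toReal_ofReal h2]
  -- Step 3: transfer integrability and integrals
  have hd : (fun ω => ENNReal.ofReal (g ω)) = fun ω => ((Real.toNNReal (g ω) : ℝ≥0) : ℝ≥0∞) :=
    rfl
  have hmg' : Measurable[m] fun ω => Real.toNNReal (g ω) :=
    measurable_real_toNNReal.comp hgm.measurable
  have hsm_log : StronglyMeasurable[m] fun ω => Real.log (g ω) :=
    (Real.measurable_log.comp hgm.measurable).stronglyMeasurable
  have hsm_φ : StronglyMeasurable[m] fun ω => g ω * Real.log (g ω) :=
    Real.continuous_mul_log.comp_stronglyMeasurable hgm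
  have hsmul : (fun ω => Real.toNNReal (g ω) • Real.log (g ω)) =ᵐ[Q.trim hm]
      fun ω => g ω * Real.log (g ω) := by
    filter_upwards [hgpos'] with ω hω
    simp [NNReal.smul_def, Real.coe_toNNReal _ hω]
  have htr_log : (fun x => Real.log (((P.trim hm).rnDeriv (Q.trim hm) x).toReal)) =ᵐ[P.trim hm]
      fun ω => Real.log (g ω) := by
    filter_upwards [htr] with ω hω
    rw [hω]
  have hiff : Integrable (fun x => Real.log (((P.trim hm).rnDeriv (Q.trim hm) x).toReal))
      (P.trim hm) ↔ Integrable (fun ω => g ω * Real.log (g ω)) Q := by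
    rw [integrable_congr htr_log,
hPtrim, hd, integrable_withDensity_iff_integrable_smul hmg',
      integrable_congr hsmul]
    constructor
    · exact fun h => integrable_of_integrable_trim hm h
    · exact fun h => h.trim hm hsm_φ
  have hval : ∫ x, Real.log (((P.trim hm).rnDeriv (Q.trim hm) x).toReal) ∂(P.trim hm) =
      ∫ ω, g ω * Real.log (g ω) ∂Q := by
    rw [integral_congr_ae htr_log, hPtrim, hd, @integral_withDensity_eq_integral_smul Ω ℝ m (Q.trim hm) _ _ (fun ω => (g ω).toNNReal) hmg' (fun ω => Real.log (g ω)),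
      integral_congr_ae hsmul, ← integral_trim hm hsm_φ]
  unfold klDiv KLAux.D
  by_cases hI : Integrable (fun ω => g ω * Real.log (g ω)) Q
  · rw [if_pos ⟨hac, hiff.mpr hI⟩, if_pos hI, hval]
  · rw [if_neg fun hco => hI (hiff.mp hco.2), if_neg hI]


end KLAux

theorem klDiv_tendsto_of_monotone_sigma_fields
    {Ω : Type*} {m0 : MeasurableSpace Ω}
    (P Q : Measure Ω) [IsProbabilityMeasure P] [IsProbabilityMeasure Q]
    (hPQ : P ≪ Q)
    (G : ℕ → MeasurableSpace Ω) (hG : ∀ n, G n ≤ m0) (hmono : Monotone G) :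
    Monotone (fun n => @klDiv Ω (G n) (P.trim (hG n)) (Q.trim (hG n))) ∧
    Tendsto (fun n => @klDiv Ω (G n) (P.trim (hG n)) (Q.trim (hG n))) atTop
      (𝓝 (@klDiv Ω (⨆ n, G n) (P.trim (show (⨆ n, G n) ≤ m0 from iSup_le hG))
            (Q.trim (show (⨆ n, G n) ≤ m0 from iSup_le hG)))) := by
  classical
  have hm' : (⨆ n, G n) ≤ m0 := iSup_le hG
  set F : Ω → ℝ := fun a => (P.rnDeriv Q a).toReal with hFdef
  have hF_int : Integrable F Q := Measure.integrable_toReal_rnDeriv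
  have hF_pos : 0 ≤ᵐ[Q] F := Eventually.of_forall fun a => ENNReal.toReal_nonneg
  have hkl : ∀ n, @klDiv Ω (G n) (P.trim (hG n)) (Q.trim (hG n)) = KLAux.D Q (Q[F|G n]) :=
    fun n => KLAux.klDiv_trim_eq P Q hPQ (hG n)
  have hkl' : @klDiv Ω (⨆ n, G n) (P.trim hm') (Q.trim hm') = KLAux.D Q (Q[F|⨆ n, G n]) :=
    KLAux.klDiv_trim_eq P Q hPQ hm'
  -- Jensen comparison
  have hcomp : ∀ (m m' : MeasurableSpace Ω), m ≤ m' → ∀ (hm2 : m' ≤ m0),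
      @KLAux.D Ω m0 Q (Q[F|m]) ≤ @KLAux.D Ω m0 Q (Q[F|m']) := by
    intro m m' hle hm2
    by_cases hI : Integrable (fun ω => (Q[F|m']) ω * Real.log ((Q[F|m']) ω)) Q
    · have hpos' : 0 ≤ᵐ[Q] (Q[F|m']) := condExp_nonneg hF_pos
      obtain ⟨hint2, hle2⟩ :=
        KLAux.jensen_condexp (m := m) Q (hle.trans hm2) integrable_condExp hpos' hI
      have htower : Q[Q[F|m']|m] =ᵐ[Q] Q[F|m] := condExp_condExp_of_le hle hm2
      have heq : (fun ω => (Q[Q[F|m']|m]) ω * Real.log ((Q[Q[F|m']|m]) ω)) =ᵐ[Q]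
          fun ω => (Q[F|m]) ω * Real.log ((Q[F|m]) ω) := by
        filter_upwards [htower] with ω hω
        rw [hω]
      have hint3 : Integrable (fun ω => (Q[F|m]) ω * Real.log ((Q[F|m]) ω)) Q :=
        (integrable_congr heq).mp hint2
      unfold KLAux.D
      rw [if_pos hint3, if_pos hI]
      apply ENNReal.ofReal_le_ofReal
      calc ∫ ω, (Q[F|m]) ω * Real.log ((Q[F|m]) ω) ∂Q
          = ∫ ω, (Q[Q[F|m']|m]) ω * Real.log ((Q[Q[F|m']|m]) ω) ∂Q :=
            (integral_congr_ae heq).symm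
        _ ≤ _ := hle2
    · have : @KLAux.D Ω m0 Q (Q[F|m']) = ⊤ := by unfold KLAux.D; rw [if_neg hI]
      rw [this]; exact le_top
  have hmonoD : Monotone fun n => KLAux.D Q (Q[F|G n]) :=
    monotone_nat_of_le_succ fun n => hcomp (G n) (G (n + 1)) (hmono (Nat.le_succ n)) (hG (n + 1))
  have hbdd : ∀ n, KLAux.D Q (Q[F|G n]) ≤ KLAux.D Q (Q[F|⨆ n, G n]) :=
    fun n => hcomp (G n) (⨆ n, G n) (le_iSup G n) hm'
  -- the supremum identification
  have hsup : (⨆ n, KLAux.D Q (Q[F|G n])) = KLAux.D Q (Q[F|⨆ n, G n]) := by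
    refine le_antisymm (iSup_le hbdd) ?_
    by_cases hall : ∀ n, Integrable (fun ω => (Q[F|G n]) ω * Real.log ((Q[F|G n]) ω)) Q
    swap
    · push_neg at hall
      obtain ⟨n, hn⟩ := hall
      have hDn : KLAux.D Q (Q[F|G n]) = ⊤ := by unfold KLAux.D; rw [if_neg hn]
      calc KLAux.D Q (Q[F|⨆ n, G n]) ≤ ⊤ := le_top
        _ = KLAux.D Q (Q[F|G n]) := hDn.symm
        _ ≤ ⨆ n, KLAux.D Q (Q[F|G n]) := le_iSup (fun n => KLAux.D Q (Q[F|G n])) n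
    · set c : ℝ := Real.exp (-1) with hcdef
      have hc0 : 0 ≤ c := (Real.exp_pos _).le
      set S := ⨆ n, KLAux.D Q (Q[F|G n]) with hSdef
      have htends : ∀ᵐ ω ∂Q, Tendsto (fun n => (Q[F|G n]) ω) atTop (𝓝 ((Q[F|⨆ n, G n]) ω)) := by
        let ℱ : Filtration ℕ m0 := ⟨G, hmono, hG⟩
        exact tendsto_ae_condExp (ℱ := ℱ) F
      have hgpos : ∀ n, 0 ≤ᵐ[Q] (Q[F|G n]) := fun n => condExp_nonneg hF_pos
      have hg'pos : 0 ≤ᵐ[Q] (Q[F|⨆ n, G n]) := condExp_nonneg hF_pos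
      set ψ : ℕ → Ω → ℝ≥0∞ :=
        fun n ω => ENNReal.ofReal ((Q[F|G n]) ω * Real.log ((Q[F|G n]) ω) + c) with hψdef
      set ψ' : Ω → ℝ≥0∞ :=
        fun ω => ENNReal.ofReal ((Q[F|⨆ n, G n]) ω * Real.log ((Q[F|⨆ n, G n]) ω) + c) with hψ'def
      have hψmeas : ∀ n, Measurable (ψ n) := by
        intro n
        have h1 : Measurable (Q[F|G n]) := (stronglyMeasurable_condExp.mono (hG n)).measurable
        exact ENNReal.measurable_ofReal.comp
          ((Real.continuous_mul_log.measurable.comp h1).add_const c)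
      have hψtend : ∀ᵐ ω ∂Q, Tendsto (fun n => ψ n ω) atTop (𝓝 (ψ' ω)) := by
        filter_upwards [htends] with ω hω
        exact (ENNReal.continuous_ofReal.tendsto _).comp
          (((Real.continuous_mul_log.tendsto _).comp hω).add_const c)
      have hFatou : ∫⁻ ω, ψ' ω ∂Q ≤ liminf (fun n => ∫⁻ ω, ψ n ω ∂Q) atTop := by
        have h1 : ∫⁻ ω, ψ' ω ∂Q = ∫⁻ ω, liminf (fun n => ψ n ω) atTop ∂Q := by
          apply lintegral_congr_ae
          filter_upwards [hψtend] with ω hω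
          exact hω.liminf_eq.symm
        rw [h1]
        exact lintegral_liminf_le hψmeas
      have hψval : ∀ n, ∫⁻ ω, ψ n ω ∂Q =
          ENNReal.ofReal (∫ ω, ((Q[F|G n]) ω * Real.log ((Q[F|G n]) ω) + c) ∂Q) := by
        intro n
        have hint : Integrable (fun ω => (Q[F|G n]) ω * Real.log ((Q[F|G n]) ω) + c) Q :=
          (hall n).add (integrable_const c)
        have hnn : 0 ≤ᵐ[Q] fun ω => (Q[F|G n]) ω * Real.log ((Q[F|G n]) ω) + c := by
          filter_upwards [hgpos n] with ω hω
          have := KLAux.neg_exp_le_mul_log hω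
          simp only [Pi.zero_apply]
          linarith
        rw [← ofReal_integral_eq_lintegral_ofReal hint hnn]
      have hDn : ∀ n, KLAux.D Q (Q[F|G n]) =
          ENNReal.ofReal (∫ ω, (Q[F|G n]) ω * Real.log ((Q[F|G n]) ω) ∂Q) := by
        intro n; unfold KLAux.D; rw [if_pos (hall n)]
      have hbound : ∀ n, ∫⁻ ω, ψ n ω ∂Q ≤ S + ENNReal.ofReal c := by
        intro n
        rw [hψval n, integral_add (hall n) (integrable_const c), integral_const]
        simp only [probReal_univ, one_smul]
        calc ENNReal.ofReal ((∫ ω, (Q[F|G n]) ω * Real.log ((Q[F|G n]) ω) ∂Q) + c)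
            ≤ ENNReal.ofReal (∫ ω, (Q[F|G n]) ω * Real.log ((Q[F|G n]) ω) ∂Q) +
              ENNReal.ofReal c := ENNReal.ofReal_add_le
          _ ≤ S + ENNReal.ofReal c := by
              refine add_le_add ?_ le_rfl
              rw [← hDn n]
              exact le_iSup (fun n => KLAux.D Q (Q[F|G n])) n
      have hlim : ∫⁻ ω, ψ' ω ∂Q ≤ S + ENNReal.ofReal c :=
        hFatou.trans (liminf_le_of_frequently_le (Frequently.of_forall hbound))
      by_cases hI' : Integrable (fun ω => (Q[F|⨆ n, G n]) ω * Real.log ((Q[F|⨆ n, G n]) ω)) Q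
      · have hval' : ∫⁻ ω, ψ' ω ∂Q =
            ENNReal.ofReal ((∫ ω, (Q[F|⨆ n, G n]) ω * Real.log ((Q[F|⨆ n, G n]) ω) ∂Q) + c) := by
          have hint : Integrable
              (fun ω => (Q[F|⨆ n, G n]) ω * Real.log ((Q[F|⨆ n, G n]) ω) + c) Q :=
            hI'.add (integrable_const c)
          have hnn : 0 ≤ᵐ[Q] fun ω => (Q[F|⨆ n, G n]) ω * Real.log ((Q[F|⨆ n, G n]) ω) + c := by
            filter_upwards [hg'pos] with ω hω
            have := KLAux.neg_exp_le_mul_log hω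
            simp only [Pi.zero_apply]
            linarith
          rw [← ofReal_integral_eq_lintegral_ofReal hint hnn,
            integral_add hI' (integrable_const c), integral_const]
          simp only [probReal_univ, one_smul]
        set X := ∫ ω, (Q[F|⨆ n, G n]) ω * Real.log ((Q[F|⨆ n, G n]) ω) ∂Q with hXdef
        have hDval : KLAux.D Q (Q[F|⨆ n, G n]) = ENNReal.ofReal X := by
          unfold KLAux.D; rw [if_pos hI']
        rw [hDval]
        rcases le_or_gt X 0 with hX | hX
        · rw [ENNReal.ofReal_of_nonpos hX]; exact zero_le
        · rw [hval', ENNReal.ofReal_add hX.le hc0] at hlim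
          exact (ENNReal.add_le_add_iff_right ENNReal.ofReal_ne_top).mp hlim
      · have hmeasφ : AEStronglyMeasurable
            (fun ω => (Q[F|⨆ n, G n]) ω * Real.log ((Q[F|⨆ n, G n]) ω)) Q :=
          (Real.continuous_mul_log.comp_stronglyMeasurable
            (stronglyMeasurable_condExp.mono hm')).aestronglyMeasurable
        have htop : ∫⁻ ω, ψ' ω ∂Q = ⊤ := by
          by_contra hne
          refine hI' ⟨hmeasφ, ?_⟩
          rw [hasFiniteIntegral_iff_norm]
          calc ∫⁻ ω, ENNReal.ofReal ‖(Q[F|⨆ n, G n]) ω * Real.log ((Q[F|⨆ n, G n]) ω)‖ ∂Q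
              ≤ ∫⁻ ω, (ψ' ω + ENNReal.ofReal c) ∂Q := by
                apply lintegral_mono_ae
                filter_upwards [hg'pos] with ω hω
                have hlb := KLAux.neg_exp_le_mul_log hω
                rw [Real.norm_eq_abs]
                have habs : |(Q[F|⨆ n, G n]) ω * Real.log ((Q[F|⨆ n, G n]) ω)| ≤
                    ((Q[F|⨆ n, G n]) ω * Real.log ((Q[F|⨆ n, G n]) ω) + c) + c := by
                  rcases abs_cases ((Q[F|⨆ n, G n]) ω * Real.log ((Q[F|⨆ n, G n]) ω)) with
                    ⟨h1, h2⟩ | ⟨h1, h2⟩ <;> simp only [Pi.zero_apply] at hω <;> linarith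
                calc ENNReal.ofReal |(Q[F|⨆ n, G n]) ω * Real.log ((Q[F|⨆ n, G n]) ω)|
                    ≤ ENNReal.ofReal (((Q[F|⨆ n, G n]) ω * Real.log ((Q[F|⨆ n, G n]) ω) + c) + c) :=
                      ENNReal.ofReal_le_ofReal habs
                  _ = ψ' ω + ENNReal.ofReal c := by
                      rw [ENNReal.ofReal_add (by simp only [Pi.zero_apply] at hω; linarith) hc0]
            _ = (∫⁻ ω, ψ' ω ∂Q) + ENNReal.ofReal c * Q Set.univ := by
                rw [lintegral_add_right _ measurable_const, lintegral_const]
            _ < ⊤ := by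
                rw [measure_univ, mul_one]
                exact ENNReal.add_lt_top.mpr ⟨lt_top_iff_ne_top.mpr hne, ENNReal.ofReal_lt_top⟩
        rw [htop] at hlim
        have hStop : S = ⊤ := by
          rcases ENNReal.add_eq_top.mp (top_le_iff.mp hlim) with h | h
          · exact h
          · exact absurd h ENNReal.ofReal_ne_top
        rw [hStop]
        exact le_top
  constructor
  · intro a b hab
    simp only
    rw [hkl a, hkl b]
    exact hcomp (G a) (G b) (hmono hab) (hG b)
  · have hfe : (fun n => @klDiv Ω (G n) (P.trim (hG n)) (Q.trim (hG n))) =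
        fun n => KLAux.D Q (Q[F|G n]) := funext hkl
    rw [hfe, hkl', ← hsup]
    exact tendsto_atTop_iSup hmonoD
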